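/- arXiv:2502.13536 — 2 statements merged into one kernel-verified Lean document; each statement's English description precedes it below -/
import Mathlib

section
/- Let n, m ≥ 1 and let f be a full assignment on an n×m Slant board whose diagonal graph G(f) is acyclic. Then the number of cells c with f(c) = true is at most (the number of vertices (x,y) with x ≤ n, y ≤ m and x+y even) − 1, and the number of cells c with f(c) = false is at most (the number of vertices (x,y) with x ≤ n, y ≤ m and x+y odd) − 1. In particular each of the two counts is at least n·m minus the other bound, so each parity class contains roughly half of the n·m diagonals. -/
/-!
Slant boards.

An `n×m` Slant board has cells indexed by `Fin n × Fin m` and vertices indexed by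
`Fin (n+1) × Fin (m+1)`.  The four corners of cell `(i,j)` are the vertices
`(i,j)`, `(i+1,j)`, `(i,j+1)`, `(i+1,j+1)`.  A full assignment is a function from
cells to `Bool`: `true` means the cell contains the diagonal joining its two
corners with even coordinate sums, `false` the other diagonal.
-/

namespace Slant

abbrev Cell (n m : ℕ) := Fin n × Fin m
abbrev Vertex (n m : ℕ) := Fin (n + 1) × Fin (m + 1)

variable {n m : ℕ}

def corner00 (c : Cell n m) : Vertex n m := (c.1.castSucc, c.2.castSucc)
def corner10 (c : Cell n m) : Vertex n m := (c.1.succ, c.2.castSucc)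
def corner01 (c : Cell n m) : Vertex n m := (c.1.castSucc, c.2.succ)
def corner11 (c : Cell n m) : Vertex n m := (c.1.succ, c.2.succ)

/-- The endpoints of the diagonal of cell `c` joining the two corners whose
coordinate sums are even. -/
def evenDiag (c : Cell n m) : Vertex n m × Vertex n m :=
  if (c.1.val + c.2.val) % 2 = 0 then (corner00 c, corner11 c) else (corner10 c, corner01 c)

/-- The endpoints of the diagonal of cell `c` joining the two corners whose
coordinate sums are odd. -/
def oddDiag (c : Cell n m) : Vertex n m × Vertex n m :=
  if (c.1.val + c.2.val) % 2 = 0 then (corner10 c, corner01 c) else (corner00 c, corner11 c)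

/-- The endpoints of the diagonal chosen in cell `c` by the assignment value `b`. -/
def diagEnds (c : Cell n m) (b : Bool) : Vertex n m × Vertex n m :=
  if b then evenDiag c else oddDiag c

/-- The diagonal graph of the (partial) assignment `p`, using only the cells in `D`:
two vertices are adjacent iff the chosen diagonal of some cell in `D` joins them.
For a full assignment take `D = Set.univ`. -/
def DiagGraph (D : Set (Cell n m)) (p : Cell n m → Bool) : SimpleGraph (Vertex n m) :=
  SimpleGraph.fromRel (fun u v => ∃ c ∈ D, diagEnds c (p c) = (u, v))

/-- `v` is one of the four corners of cell `c`. -/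
def isCorner (v : Vertex n m) (c : Cell n m) : Prop :=
  v = corner00 c ∨ v = corner10 c ∨ v = corner01 c ∨ v = corner11 c

/-- The chosen diagonal of cell `c` under assignment `f` passes through vertex `v`. -/
def passesThrough (f : Cell n m → Bool) (c : Cell n m) (v : Vertex n m) : Prop :=
  (diagEnds c (f c)).1 = v ∨ (diagEnds c (f c)).2 = v

/-- The degree of a vertex in a graph on the board's vertices. -/
noncomputable def deg (G : SimpleGraph (Vertex n m)) (v : Vertex n m) : ℕ :=
  (G.neighborSet v).ncard


section Aux
open SimpleGraph

private lemma acyclic_edge_bound {V : Type*} [Fintype V] [Nonempty V] {G : SimpleGraph V}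
    (hG : G.IsAcyclic) : G.edgeSet.ncard ≤ Fintype.card V - 1 := by
  classical
  obtain ⟨H, hHs, hmax⟩ := (Finset.univ.filter fun H : SimpleGraph V => G ≤ H ∧ H.IsAcyclic
    ).exists_max_image (fun H => H.edgeSet.ncard) ⟨G, by simp [hG]⟩
  simp only [Finset.mem_filter, Finset.mem_univ, true_and] at hHs hmax
  obtain ⟨hGH, hHa⟩ := hHs
  have hconn : H.Connected := by
    rw [connected_iff]
    refine ⟨fun u v => ?_, ‹Nonempty V›⟩
    by_contra hre
    have hne : u ≠ v := fun h => hre (h ▸ Reachable.refl u)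
    set H' := H ⊔ SimpleGraph.fromEdgeSet {s(u, v)} with hH'
    have hle : H ≤ H' := le_sup_left
    have hsd : H' \ SimpleGraph.fromEdgeSet {s(u, v)} ≤ H := by
      intro a b hab
      rcases hab with ⟨h1 | h1, h2⟩
      · exact h1
      · exact absurd h1 h2
    have hH'a : H'.IsAcyclic := by
      intro x c hc
      by_cases hmem : s(u, v) ∈ c.edges
      · have h2 := (adj_and_reachable_delete_edges_iff_exists_cycle.mpr ⟨x, c, hc, hmem⟩).2
        exact hre (h2.mono hsd)
      · have hsub : ∀ e ∈ c.edges, e ∈ H.edgeSet := by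
          intro e he
          have h3 : e ∈ H'.edgeSet := c.edges_subset_edgeSet he
          rw [hH', edgeSet_sup] at h3
          rcases h3 with h3 | h3
          · exact h3
          · rw [edgeSet_fromEdgeSet] at h3
            exact absurd (h3.1 ▸ he) hmem
        exact hHa (c.transfer H hsub) (hc.transfer hsub)
    have hadj : H'.Adj u v := Or.inr (by simp [SimpleGraph.fromEdgeSet_adj, hne])
    have hlt : H.edgeSet.ncard < H'.edgeSet.ncard := by
      apply Set.ncard_lt_ncard _ H'.edgeSet.toFinite
      constructor
      · exact edgeSet_mono hle
      · intro hsub'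
        exact hre ((H.mem_edgeSet.mp (hsub' (H'.mem_edgeSet.mpr hadj))).reachable)
    exact absurd (hmax H' ⟨le_trans hGH hle, hH'a⟩) (not_le.mpr hlt)
  have htree : H.IsTree := ⟨hconn, hHa⟩
  have hcard := htree.card_edgeFinset
  have h1 : H.edgeSet.ncard = H.edgeFinset.card := by
    rw [edgeFinset, Set.ncard_eq_toFinset_card']
  have h2 : G.edgeSet.ncard ≤ H.edgeSet.ncard :=
    Set.ncard_le_ncard (edgeSet_mono hGH) H.edgeSet.toFinite
  omega

private lemma acyclic_comap {V W : Type*} {G : SimpleGraph V} (hG : G.IsAcyclic)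
    {f : W → V} (hf : Function.Injective f) : (G.comap f).IsAcyclic := by
  intro w c hc
  exact hG (c.map ⟨f, fun h => h⟩) (hc.map hf)

end Aux

lemma diag_parity (c : Cell n m) (b : Bool) :
    (((diagEnds c b).1.1.val + (diagEnds c b).1.2.val) % 2 = cond b 0 1) ∧
    (((diagEnds c b).2.1.val + (diagEnds c b).2.2.val) % 2 = cond b 0 1) := by
  cases b <;>
  · simp only [diagEnds, evenDiag, oddDiag, corner00, corner01, corner10, corner11,
      cond_true, cond_false, if_true, if_false, Bool.false_eq_true]
    split_ifs with h <;>
      simp only [Fin.val_succ, Fin.coe_castSucc] <;> omega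

lemma diag_ne (c : Cell n m) (b : Bool) : (diagEnds c b).1 ≠ (diagEnds c b).2 := by
  cases b <;>
  · simp only [diagEnds, evenDiag, oddDiag, corner00, corner01, corner10, corner11,
      if_true, if_false, Bool.false_eq_true]
    split_ifs with h <;>
      simp only [ne_eq, Prod.mk.injEq, Fin.ext_iff, Fin.val_succ, Fin.coe_castSucc,
        not_and] <;> omega

lemma diag_inj {c d : Cell n m} (b : Bool)
    (h : diagEnds c b = diagEnds d b ∨ diagEnds c b = ((diagEnds d b).2, (diagEnds d b).1)) :
    c = d := by
  rcases c with ⟨i, j⟩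
  rcases d with ⟨k, l⟩
  cases b <;>
  · simp only [diagEnds, evenDiag, oddDiag, corner00, corner01, corner10, corner11,
      if_true, if_false, Bool.false_eq_true] at h
    split_ifs at h with h1 h2 h2 <;>
      rcases h with h | h <;>
      · simp only [Prod.mk.injEq, Fin.ext_iff, Fin.val_succ, Fin.coe_castSucc] at h ⊢
        omega

lemma count_bound {n m : ℕ} (f : Cell n m → Bool) (b : Bool)
    (hf : (DiagGraph (Set.univ : Set (Cell n m)) f).IsAcyclic)
    (hne : Nonempty {v : Vertex n m // (v.1.val + v.2.val) % 2 = cond b 0 1}) :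
    (Finset.univ.filter fun c : Cell n m => f c = b).card ≤
      Fintype.card {v : Vertex n m // (v.1.val + v.2.val) % 2 = cond b 0 1} - 1 := by
  classical
  set S := {v : Vertex n m // (v.1.val + v.2.val) % 2 = cond b 0 1} with hS
  let Gs : SimpleGraph S := SimpleGraph.fromRel fun x y =>
    ∃ c : Cell n m, f c = b ∧ diagEnds c b = (x.val, y.val)
  have hGsle : Gs ≤ (DiagGraph Set.univ f).comap (Subtype.val) := by
    intro x y hxy
    obtain ⟨hxyne, hrel⟩ := hxy
    refine ⟨fun h => hxyne (Subtype.ext h), ?_⟩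
    rcases hrel with ⟨c, hcb, hc⟩ | ⟨c, hcb, hc⟩
    · exact Or.inl ⟨c, Set.mem_univ c, by rw [hcb]; exact hc⟩
    · exact Or.inr ⟨c, Set.mem_univ c, by rw [hcb]; exact hc⟩
  have hGsA : Gs.IsAcyclic := fun w c hc =>
    acyclic_comap hf Subtype.val_injective (c.mapLe hGsle) (hc.mapLe hGsle)
  have hkey : ∀ c : Cell n m, f c = b →
      ∃ (x y : S), x.val = (diagEnds c b).1 ∧ y.val = (diagEnds c b).2 ∧ s(x, y) ∈ Gs.edgeSet := by
    intro c hc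
    refine ⟨⟨(diagEnds c b).1, (diag_parity c b).1⟩, ⟨(diagEnds c b).2, (diag_parity c b).2⟩,
      rfl, rfl, ?_⟩
    rw [SimpleGraph.mem_edgeSet]
    exact ⟨fun h => diag_ne c b (congrArg Subtype.val h), Or.inl ⟨c, hc, rfl⟩⟩
  choose x y hx hy hmem using hkey
  have hcard : (Finset.univ.filter fun c : Cell n m => f c = b).card ≤ Gs.edgeFinset.card := by
    apply Finset.card_le_card_of_injOn
      (fun c => if h : f c = b then s(x c h, y c h) else s(Classical.arbitrary S, Classical.arbitrary S))
    · intro c hc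
      simp only [Finset.mem_coe, Finset.mem_filter, Finset.mem_univ, true_and] at hc
      beta_reduce
      rw [dif_pos hc]
      exact SimpleGraph.mem_edgeFinset.mpr (hmem c hc)
    · intro c hc d hd hcd
      simp only [Finset.mem_coe, Finset.mem_filter, Finset.mem_univ, true_and] at hc hd
      simp only [dif_pos hc, dif_pos hd, Sym2.eq_iff] at hcd
      apply diag_inj b
      rcases hcd with ⟨h1, h2⟩ | ⟨h1, h2⟩
      · left
        have e1 := congrArg Subtype.val h1
        have e2 := congrArg Subtype.val h2
        rw [hx, hx] at e1
        rw [hy, hy] at e2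
        exact Prod.ext e1 e2
      · right
        have e1 := congrArg Subtype.val h1
        have e2 := congrArg Subtype.val h2
        rw [hx, hy] at e1
        rw [hy, hx] at e2
        exact Prod.ext e1 e2
  have hbound := acyclic_edge_bound hGsA
  have heq : Gs.edgeSet.ncard = Gs.edgeFinset.card := by
    rw [SimpleGraph.edgeFinset, Set.ncard_eq_toFinset_card']
  have hSc : Fintype.card S =
      Fintype.card {v : Vertex n m // (v.1.val + v.2.val) % 2 = cond b 0 1} :=
    Fintype.card_congr (Equiv.refl _)
  omega

/-- In an acyclic full assignment, the diagonals of each parity class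
form a forest on the vertices of that parity; so each count of cells is at most (number
of vertices of that parity) − 1, and hence at least `n·m` minus the other bound. -/
theorem parity_class_count (n m : ℕ) (hn : 1 ≤ n) (hm : 1 ≤ m) (f : Cell n m → Bool)
    (hf : (DiagGraph (Set.univ : Set (Cell n m)) f).IsAcyclic) :
    ((Finset.univ.filter fun c : Cell n m => f c = true).card ≤
        (Finset.univ.filter fun v : Vertex n m => (v.1.val + v.2.val) % 2 = 0).card - 1) ∧
    ((Finset.univ.filter fun c : Cell n m => f c = false).card ≤
        (Finset.univ.filter fun v : Vertex n m => (v.1.val + v.2.val) % 2 = 1).card - 1) ∧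
    (n * m - ((Finset.univ.filter fun v : Vertex n m => (v.1.val + v.2.val) % 2 = 1).card - 1) ≤
        (Finset.univ.filter fun c : Cell n m => f c = true).card) ∧
    (n * m - ((Finset.univ.filter fun v : Vertex n m => (v.1.val + v.2.val) % 2 = 0).card - 1) ≤
        (Finset.univ.filter fun c : Cell n m => f c = false).card) := by
  classical
  have hne0 : Nonempty {v : Vertex n m // (v.1.val + v.2.val) % 2 = cond true 0 1} :=
    ⟨⟨(0, 0), by simp⟩⟩
  have hne1 : Nonempty {v : Vertex n m // (v.1.val + v.2.val) % 2 = cond false 0 1} :=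
    ⟨⟨(⟨1, by omega⟩, 0), by simp⟩⟩
  have h0 := count_bound f true hf hne0
  have h1 := count_bound f false hf hne1
  rw [Fintype.card_subtype] at h0 h1
  have htot : (Finset.univ.filter fun c : Cell n m => f c = true).card +
      (Finset.univ.filter fun c : Cell n m => f c = false).card = n * m := by
    have h2 := Finset.card_filter_add_card_filter_not
      (s := (Finset.univ : Finset (Cell n m))) (p := fun c => f c = true)
    simpa [Bool.not_eq_true, Finset.card_univ, Fintype.card_prod, Fintype.card_fin] using h2
  simp only [cond_true, cond_false, Finset.filter_congr_decidable] at h0 h1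
  refine ⟨by omega, by omega, by omega, by omega⟩

end Slant
end

section
/- Let K be a finite set of clues on an n×m Slant board, let D be a set of cells containing every cell that has a clued vertex as a corner, and let p be a partial assignment on D whose diagonal graph G(p) is acyclic and in which every clued vertex v has degree in G(p) equal to its clue value. Then there exists a full assignment f extending p whose diagonal graph G(f) is acyclic and which satisfies every clue in K; in particular the degree in G(f) of every clued vertex equals its degree in G(p). -/
/-!
Slant boards.

An `n×m` Slant board has cells indexed by `Fin n × Fin m` and vertices indexed by
`Fin (n+1) × Fin (m+1)`.  The four corners of cell `(i,j)` are the vertices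
`(i,j)`, `(i+1,j)`, `(i,j+1)`, `(i+1,j+1)`.  A full assignment is a function from
cells to `Bool`: `true` means the cell contains the diagonal joining its two
corners with even coordinate sums, `false` the other diagonal.
-/

namespace Slant

variable {n m : ℕ}

-- ### helpers

lemma zmod2_add_self (x : ZMod 2) : x + x = 0 := by revert x; decide

lemma zmod2_cancel {x y : ZMod 2} (h : x + y = 0) : x = y := by revert x y; decide

open scoped Classical in
noncomputable def ind (P : Prop) : ZMod 2 := if P then 1 else 0

lemma ind_congr {P Q : Prop} (h : P ↔ Q) : ind P = ind Q := by
  unfold ind; split_ifs with h1 h2 <;> tauto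

@[simp] lemma ind_true {P : Prop} (h : P) : ind P = 1 := by simp [ind, h]
@[simp] lemma ind_false {P : Prop} (h : ¬ P) : ind P = 0 := by simp [ind, h]

/-- parity of a vertex -/
def pv (v : Vertex n m) : ℕ := (v.1.val + v.2.val) % 2

/-- row of the left endpoint of the even diagonal of `c` -/
def Lrow (c : Cell n m) : ℕ := if (c.1.val + c.2.val) % 2 = 0 then c.1.val else c.1.val + 1
/-- row of the right endpoint of the even diagonal of `c` -/
def Rrow (c : Cell n m) : ℕ := if (c.1.val + c.2.val) % 2 = 0 then c.1.val + 1 else c.1.val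

def vnat (v : Vertex n m) : ℕ × ℕ := (v.1.val, v.2.val)

lemma vnat_evenDiag1 (c : Cell n m) : vnat (evenDiag c).1 = (Lrow c, c.2.val) := by
  unfold evenDiag Lrow; split_ifs <;>
    simp [vnat, corner00, corner10, Fin.coe_castSucc, Fin.val_succ]

lemma vnat_evenDiag2 (c : Cell n m) : vnat (evenDiag c).2 = (Rrow c, c.2.val + 1) := by
  unfold evenDiag Rrow; split_ifs <;>
    simp [vnat, corner11, corner01, Fin.coe_castSucc, Fin.val_succ]

lemma vnat_oddDiag1 (c : Cell n m) : vnat (oddDiag c).1 = (Rrow c, c.2.val) := by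
  unfold oddDiag Rrow; split_ifs <;>
    simp [vnat, corner00, corner10, Fin.coe_castSucc, Fin.val_succ]

lemma vnat_oddDiag2 (c : Cell n m) : vnat (oddDiag c).2 = (Lrow c, c.2.val + 1) := by
  unfold oddDiag Lrow; split_ifs <;>
    simp [vnat, corner11, corner01, Fin.coe_castSucc, Fin.val_succ]

lemma pv_evenDiag1 (c : Cell n m) : pv (evenDiag c).1 = 0 := by
  unfold evenDiag pv; split_ifs with h <;>
    simp [corner00, corner10, Fin.coe_castSucc, Fin.val_succ] <;> omega

lemma pv_evenDiag2 (c : Cell n m) : pv (evenDiag c).2 = 0 := by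
  unfold evenDiag pv; split_ifs with h <;>
    simp [corner11, corner01, Fin.coe_castSucc, Fin.val_succ] <;> omega

lemma pv_oddDiag1 (c : Cell n m) : pv (oddDiag c).1 = 1 := by
  unfold oddDiag pv; split_ifs with h <;>
    simp [corner00, corner10, Fin.coe_castSucc, Fin.val_succ] <;> omega

lemma pv_oddDiag2 (c : Cell n m) : pv (oddDiag c).2 = 1 := by
  unfold oddDiag pv; split_ifs with h <;>
    simp [corner11, corner01, Fin.coe_castSucc, Fin.val_succ] <;> omega

-- ### parity sums along a list of cells

noncomputable def S (l : List (Cell n m)) (w : ℕ × ℕ) : ZMod 2 :=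
  (l.map fun c => ind (c.2.val + 1 = w.2 ∧ Rrow c < w.1)).sum

noncomputable def NL (l : List (Cell n m)) (b t : ℕ) : ZMod 2 :=
  (l.map fun c => ind (c.2.val = b ∧ Lrow c < t)).sum

noncomputable def NR (l : List (Cell n m)) (b t : ℕ) : ZMod 2 :=
  (l.map fun c => ind (c.2.val + 1 = b ∧ Rrow c < t)).sum

noncomputable def dg (l : List (Cell n m)) (w : ℕ × ℕ) : ZMod 2 :=
  (l.map fun c => ind ((Lrow c, c.2.val) = w) + ind ((Rrow c, c.2.val + 1) = w)).sum

@[simp] lemma S_nil (w : ℕ × ℕ) : S ([] : List (Cell n m)) w = 0 := rfl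
@[simp] lemma dg_nil (w : ℕ × ℕ) : dg ([] : List (Cell n m)) w = 0 := rfl

lemma S_cons (c : Cell n m) (l : List (Cell n m)) (w : ℕ × ℕ) :
    S (c :: l) w = ind (c.2.val + 1 = w.2 ∧ Rrow c < w.1) + S l w := rfl

lemma dg_cons (c : Cell n m) (l : List (Cell n m)) (w : ℕ × ℕ) :
    dg (c :: l) w = (ind ((Lrow c, c.2.val) = w) + ind ((Rrow c, c.2.val + 1) = w)) + dg l w := rfl

lemma sum_ind_range (x y b t : ℕ) :
    (∑ a ∈ Finset.range t, ind ((x, y) = (a, b))) = ind (y = b ∧ x < t) := by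
  induction t with
  | zero => simp
  | succ t ih =>
    rw [Finset.sum_range_succ, ih,
      ind_congr (show ((x, y) = (t, b)) ↔ (x = t ∧ y = b) by simp [Prod.ext_iff])]
    unfold ind
    split_ifs <;> first | decide | (exfalso; omega)

lemma colStep (l : List (Cell n m)) (b t : ℕ) :
    NL l b t + NR l b t = ∑ a ∈ Finset.range t, dg l (a, b) := by
  induction l with
  | nil => simp [NL, NR, dg]
  | cons c l ih =>
    have h1 : (∑ a ∈ Finset.range t, ind ((Lrow c, c.2.val) = (a, b)))
        = ind (c.2.val = b ∧ Lrow c < t) := sum_ind_range _ _ _ _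
    have h2 : (∑ a ∈ Finset.range t, ind ((Rrow c, c.2.val + 1) = (a, b)))
        = ind (c.2.val + 1 = b ∧ Rrow c < t) := sum_ind_range _ _ _ _
    simp only [NL, NR, dg, List.map_cons, List.sum_cons] at *
    rw [Finset.sum_add_distrib, ← ih, Finset.sum_add_distrib, h1, h2]
    ring

lemma NL_eq_NR (l : List (Cell n m)) (hdg : ∀ w, dg l w = 0) (b t : ℕ) :
    NL l b t = NR l b t := by
  apply zmod2_cancel
  rw [colStep]
  simp [hdg]

lemma pointwise (c' c : Cell n m) :
    ind (c'.2.val = c.2.val ∧ Lrow c' < Rrow c) + ind (c'.2.val + 1 = c.2.val + 1 ∧ Rrow c' < Lrow c)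
      = ind (c' = c) := by
  have hE : (c' = c) ↔ (c'.1.val = c.1.val ∧ c'.2.val = c.2.val) := by
    rw [Prod.ext_iff, Fin.val_inj, Fin.val_inj]
  rw [ind_congr hE]
  unfold Lrow Rrow ind
  split_ifs <;> first | decide | (exfalso; omega)

lemma keyAux (c : Cell n m) (l : List (Cell n m)) :
    NL l c.2.val (Rrow c) +
      (l.map fun c' => ind (c'.2.val + 1 = c.2.val + 1 ∧ Rrow c' < Lrow c)).sum
      = (l.map fun c' => ind (c' = c)).sum := by
  induction l with
  | nil => rfl
  | cons a l ih =>
    simp only [NL, List.map_cons, List.sum_cons] at *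
    linear_combination (pointwise a c) + ih

lemma keyStep (l : List (Cell n m)) (hdg : ∀ w, dg l w = 0) (c : Cell n m) :
    S l (Rrow c, c.2.val) + S l (Lrow c, c.2.val + 1) = (l.map fun c' => ind (c' = c)).sum := by
  have hS1 : S l (Rrow c, c.2.val) = NL l c.2.val (Rrow c) := by
    rw [NL_eq_NR l hdg]; rfl
  rw [hS1]
  exact keyAux c l

lemma sum_ind_ne_zero (l : List (Cell n m)) (c : Cell n m) (h : c ∉ l) :
    (l.map fun c' => ind (c' = c)).sum = 0 := by
  apply List.sum_eq_zero
  intro x hx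
  simp only [List.mem_map] at hx
  obtain ⟨c', hc', rfl⟩ := hx
  exact ind_false (fun hh => h (hh ▸ hc'))

lemma adj_iff {D : Set (Cell n m)} {p : Cell n m → Bool} {u v : Vertex n m} :
    (DiagGraph D p).Adj u v ↔
      u ≠ v ∧ ∃ c ∈ D, (diagEnds c (p c) = (u, v) ∨ diagEnds c (p c) = (v, u)) := by
  rw [DiagGraph, SimpleGraph.fromRel_adj]
  constructor
  · rintro ⟨h1, h2 | h2⟩ <;> obtain ⟨c, hc, hcc⟩ := h2 <;> exact ⟨h1, c, hc, by tauto⟩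
  · rintro ⟨h1, c, hc, h2 | h2⟩
    · exact ⟨h1, Or.inl ⟨c, hc, h2⟩⟩
    · exact ⟨h1, Or.inr ⟨c, hc, h2⟩⟩

lemma diag_cases (c : Cell n m) (b : Bool) : diagEnds c b = evenDiag c ∨ diagEnds c b = oddDiag c := by
  cases b <;> simp [diagEnds]

lemma pv_ends (c : Cell n m) (b : Bool) : pv (diagEnds c b).1 = pv (diagEnds c b).2 := by
  rcases diag_cases c b with h | h <;> rw [h]
  · rw [pv_evenDiag1, pv_evenDiag2]
  · rw [pv_oddDiag1, pv_oddDiag2]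

lemma pv_adj {D : Set (Cell n m)} {p : Cell n m → Bool} {u v : Vertex n m}
    (h : (DiagGraph D p).Adj u v) : pv u = pv v := by
  rcases adj_iff.mp h with ⟨-, c, -, hc | hc⟩
  · have := pv_ends c (p c); rw [hc] at this; exact this
  · have := pv_ends c (p c); rw [hc] at this; exact this.symm

lemma evenDiag_of_pv {c : Cell n m} {b : Bool} (h : pv (diagEnds c b).1 = 0) :
    diagEnds c b = evenDiag c := by
  rcases diag_cases c b with he | he
  · exact he
  · rw [he, pv_oddDiag1] at h; exact absurd h one_ne_zero

lemma oddDiag_of_pv {c : Cell n m} {b : Bool} (h : pv (diagEnds c b).1 = 1) :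
    diagEnds c b = oddDiag c := by
  rcases diag_cases c b with he | he
  · rw [he, pv_evenDiag1] at h; exact absurd h.symm one_ne_zero
  · exact he

lemma walk_dg {D : Set (Cell n m)} {p : Cell n m → Bool} {u v : Vertex n m}
    (W : (DiagGraph D p).Walk u v) : pv u = 0 →
    ∃ l : List (Cell n m), (∀ c ∈ l, c ∈ D ∧ diagEnds c (p c) = evenDiag c) ∧
      (∀ w, dg l w = ind (vnat u = w) + ind (vnat v = w)) := by
  induction W with
  | nil =>
    intro _
    exact ⟨[], by simp, fun w => by rw [dg_nil, zmod2_add_self]⟩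
  | @cons a b v h W ih =>
    intro hpu
    have hpb : pv b = 0 := (pv_adj h) ▸ hpu
    obtain ⟨l, hl, hdgl⟩ := ih hpb
    rcases adj_iff.mp h with ⟨hne, c, hcD, hc | hc⟩
    · have hcev : diagEnds c (p c) = evenDiag c :=
        evenDiag_of_pv (by rw [hc]; exact hpu)
      refine ⟨c :: l, ?_, ?_⟩
      · rintro c' hc'
        rcases List.mem_cons.mp hc' with rfl | hmem
        · exact ⟨hcD, hcev⟩
        · exact hl c' hmem
      · intro w
        rw [dg_cons, hdgl w]
        have h1 : (Lrow c, c.2.val) = vnat a := by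
          rw [← vnat_evenDiag1, ← hcev, hc]
        have h2 : (Rrow c, c.2.val + 1) = vnat b := by
          rw [← vnat_evenDiag2, ← hcev, hc]
        rw [h1, h2]
        linear_combination zmod2_add_self (ind (vnat b = w))
    · have hcev : diagEnds c (p c) = evenDiag c :=
        evenDiag_of_pv (by rw [hc]; exact hpb)
      refine ⟨c :: l, ?_, ?_⟩
      · rintro c' hc'
        rcases List.mem_cons.mp hc' with rfl | hmem
        · exact ⟨hcD, hcev⟩
        · exact hl c' hmem
      · intro w
        rw [dg_cons, hdgl w]
        have h1 : (Lrow c, c.2.val) = vnat b := by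
          rw [← vnat_evenDiag1, ← hcev, hc]
        have h2 : (Rrow c, c.2.val + 1) = vnat a := by
          rw [← vnat_evenDiag2, ← hcev, hc]
        rw [h1, h2]
        linear_combination zmod2_add_self (ind (vnat b = w))

lemma S_const {D : Set (Cell n m)} {p : Cell n m → Bool} (C : List (Cell n m))
    (hdg : ∀ w, dg C w = 0)
    (hdisj : ∀ c ∈ D, diagEnds c (p c) = oddDiag c → c ∉ C)
    {u v : Vertex n m} (W : (DiagGraph D p).Walk u v) : pv u = 1 →
    S C (vnat u) = S C (vnat v) := by
  induction W with
  | nil => intro _; rfl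
  | @cons a b v h W ih =>
    intro hpu
    have hpb : pv b = 1 := (pv_adj h) ▸ hpu
    have step : S C (vnat a) = S C (vnat b) := by
      rcases adj_iff.mp h with ⟨hne, c, hcD, hc | hc⟩
      · have hodd : diagEnds c (p c) = oddDiag c :=
          oddDiag_of_pv (by rw [hc]; exact hpu)
        have hkey := keyStep C hdg c
        rw [sum_ind_ne_zero C c (hdisj c hcD hodd)] at hkey
        have h1 : vnat a = (Rrow c, c.2.val) := by rw [← vnat_oddDiag1, ← hodd, hc]
        have h2 : vnat b = (Lrow c, c.2.val + 1) := by rw [← vnat_oddDiag2, ← hodd, hc]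
        rw [h1, h2]
        exact zmod2_cancel hkey
      · have hodd : diagEnds c (p c) = oddDiag c :=
          oddDiag_of_pv (by rw [hc]; exact hpb)
        have hkey := keyStep C hdg c
        rw [sum_ind_ne_zero C c (hdisj c hcD hodd)] at hkey
        have h1 : vnat b = (Rrow c, c.2.val) := by rw [← vnat_oddDiag1, ← hodd, hc]
        have h2 : vnat a = (Lrow c, c.2.val + 1) := by rw [← vnat_oddDiag2, ← hodd, hc]
        rw [h1, h2]
        exact (zmod2_cancel hkey).symm
    exact step.trans (ih hpb)

lemma not_both_reachable {D : Set (Cell n m)} {p : Cell n m → Bool} (c : Cell n m) (hc : c ∉ D)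
    (he : (DiagGraph D p).Reachable (evenDiag c).1 (evenDiag c).2)
    (ho : (DiagGraph D p).Reachable (oddDiag c).1 (oddDiag c).2) : False := by
  obtain ⟨We⟩ := he
  obtain ⟨Wo⟩ := ho
  obtain ⟨l, hl, hdgl⟩ := walk_dg We (pv_evenDiag1 c)
  set C : List (Cell n m) := c :: l with hC
  have hdgC : ∀ w, dg C w = 0 := by
    intro w
    rw [hC, dg_cons, hdgl w, ← Prod.mk.eta (p := vnat (evenDiag c).1)]
    rw [vnat_evenDiag1, vnat_evenDiag2]
    linear_combination zmod2_add_self (ind ((Lrow c, c.2.val) = w)) +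
      zmod2_add_self (ind ((Rrow c, c.2.val + 1) = w))
  have hdisj : ∀ c' ∈ D, diagEnds c' (p c') = oddDiag c' → c' ∉ C := by
    intro c' hc'D hodd hmem
    rcases List.mem_cons.mp hmem with rfl | hmem
    · exact hc hc'D
    · have hev := (hl c' hmem).2
      have h0 : pv (diagEnds c' (p c')).1 = 0 := by rw [hev, pv_evenDiag1]
      rw [hodd, pv_oddDiag1] at h0
      exact one_ne_zero h0
  have hSc := S_const C hdgC hdisj Wo (pv_oddDiag1 c)
  have hkey := keyStep C hdgC c
  have hcnot : c ∉ l := fun hmem => hc (hl c hmem).1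
  have hsum : (C.map fun c' => ind (c' = c)).sum = 1 := by
    rw [hC, List.map_cons, List.sum_cons, ind_true rfl, sum_ind_ne_zero l c hcnot, add_zero]
  rw [hsum] at hkey
  rw [vnat_oddDiag1, vnat_oddDiag2] at hSc
  rw [hSc, zmod2_add_self] at hkey
  exact zero_ne_one hkey

lemma isAcyclic_sup_edge {V : Type*} {G : SimpleGraph V} (hG : G.IsAcyclic) {u v : V}
    (h : ¬G.Reachable u v) : (G ⊔ SimpleGraph.edge u v).IsAcyclic := by
  classical
  have hne : u ≠ v := by rintro rfl; exact h (SimpleGraph.Reachable.refl u)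
  have hle : (G ⊔ SimpleGraph.edge u v) \ SimpleGraph.fromEdgeSet {s(u, v)} ≤ G := by
    intro x y hxy
    rw [SimpleGraph.sdiff_adj] at hxy
    obtain ⟨hadj, hnot⟩ := hxy
    rcases hadj with hG' | hE
    · exact hG'
    · exfalso
      apply hnot
      rw [SimpleGraph.edge_adj] at hE
      rw [SimpleGraph.fromEdgeSet_adj]
      refine ⟨?_, hE.2⟩
      rcases hE.1 with ⟨rfl, rfl⟩ | ⟨rfl, rfl⟩
      · rfl
      · exact Sym2.eq_swap
  have hbridge : (G ⊔ SimpleGraph.edge u v).IsBridge s(u, v) := by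
    rw [SimpleGraph.isBridge_iff]
    exact fun hr => h (hr.mono hle)
  intro x W hW
  by_cases hmem : s(u, v) ∈ W.edges
  · rw [SimpleGraph.isBridge_iff_mem_and_forall_cycle_notMem (W.edges_subset_edgeSet hmem)] at hbridge
    exact hbridge W hW hmem
  · have hsub : ∀ e ∈ W.edges, e ∈ G.edgeSet := by
      intro e hee
      have hmem2 : e ∈ (G ⊔ SimpleGraph.edge u v).edgeSet := W.edges_subset_edgeSet hee
      rw [SimpleGraph.edgeSet_sup, SimpleGraph.edge_edgeSet_of_ne hne] at hmem2
      rcases hmem2 with h1 | h1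
      · exact h1
      · exact absurd (Set.mem_singleton_iff.mp h1 ▸ hee) (by rw [Set.mem_singleton_iff.mp h1] at hee; exact absurd hee hmem)
    exact hG (W.transfer G hsub) (hW.transfer hsub)

lemma diagGraph_insert {D : Set (Cell n m)} {p : Cell n m → Bool} (c : Cell n m) (hc : c ∉ D)
    (b : Bool) :
    DiagGraph (insert c D) (Function.update p c b)
      = DiagGraph D p ⊔ SimpleGraph.edge (diagEnds c b).1 (diagEnds c b).2 := by
  ext x y
  rw [SimpleGraph.sup_adj, adj_iff, adj_iff, SimpleGraph.edge_adj]
  constructor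
  · rintro ⟨hne, c', hc', hor⟩
    rcases Set.mem_insert_iff.mp hc' with rfl | hc'D
    · right
      rw [Function.update_self] at hor
      refine ⟨?_, hne⟩
      rcases hor with h | h
      · left; exact ⟨by rw [h], by rw [h]⟩
      · right; exact ⟨by rw [h], by rw [h]⟩
    · left
      have hne' : c' ≠ c := fun hh => hc (hh ▸ hc'D)
      rw [Function.update_of_ne hne'] at hor
      exact ⟨hne, c', hc'D, hor⟩
  · rintro (⟨hne, c', hc'D, hor⟩ | ⟨hor, hne⟩)
    · have hne' : c' ≠ c := fun hh => hc (hh ▸ hc'D)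
      refine ⟨hne, c', Set.mem_insert_of_mem _ hc'D, ?_⟩
      rw [Function.update_of_ne hne']
      exact hor
    · refine ⟨hne, c, Set.mem_insert _ _, ?_⟩
      rw [Function.update_self]
      rcases hor with ⟨rfl, rfl⟩ | ⟨rfl, rfl⟩
      · left; exact Prod.mk.eta.symm ▸ rfl
      · right; exact Prod.mk.eta.symm ▸ rfl

lemma exists_extend {D : Set (Cell n m)} {p : Cell n m → Bool}
    (hacyc : (DiagGraph D p).IsAcyclic) (c : Cell n m) (hc : c ∉ D) :
    ∃ b, (DiagGraph (insert c D) (Function.update p c b)).IsAcyclic := by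
  by_cases hre : (DiagGraph D p).Reachable (evenDiag c).1 (evenDiag c).2
  · refine ⟨false, ?_⟩
    rw [diagGraph_insert c hc false]
    have hodd : diagEnds c false = oddDiag c := rfl
    rw [hodd]
    exact isAcyclic_sup_edge hacyc (fun hr => not_both_reachable c hc hre hr)
  · refine ⟨true, ?_⟩
    rw [diagGraph_insert c hc true]
    have hev : diagEnds c true = evenDiag c := rfl
    rw [hev]
    exact isAcyclic_sup_edge hacyc hre

lemma extend_all : ∀ (k : ℕ) (D : Set (Cell n m)) (p : Cell n m → Bool),
    (Set.univ \ D).ncard ≤ k → (DiagGraph D p).IsAcyclic →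
    ∃ f, (∀ c ∈ D, f c = p c) ∧ (DiagGraph (Set.univ : Set (Cell n m)) f).IsAcyclic := by
  intro k
  induction k with
  | zero =>
    intro D p hcard hacyc
    have hzero : (Set.univ \ D).ncard = 0 := Nat.le_zero.mp hcard
    have hempty : Set.univ \ D = ∅ := (Set.ncard_eq_zero (Set.toFinite _)).mp hzero
    have hD : D = Set.univ :=
      le_antisymm (Set.subset_univ D) (Set.diff_eq_empty.mp hempty)
    exact ⟨p, fun c _ => rfl, hD ▸ hacyc⟩
  | succ k ih =>
    intro D p hcard hacyc
    by_cases huniv : D = Set.univ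
    · exact ⟨p, fun c _ => rfl, huniv ▸ hacyc⟩
    · have hex : ∃ c, c ∉ D := by
        by_contra hno
        push_neg at hno
        apply huniv
        ext c
        simp [hno c]
      obtain ⟨c, hc⟩ := hex
      obtain ⟨b, hb⟩ := exists_extend hacyc c hc
      have hcard' : (Set.univ \ insert c D).ncard ≤ k := by
        have h1 : Set.univ \ insert c D = (Set.univ \ D) \ {c} := by
          ext x
          simp only [Set.mem_diff, Set.mem_insert_iff, Set.mem_univ, true_and,
            Set.mem_singleton_iff]
          tauto
        have hmem : c ∈ Set.univ \ D := ⟨trivial, hc⟩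
        have hlt := Set.ncard_diff_singleton_lt_of_mem hmem (Set.toFinite _)
        rw [h1]
        omega
      obtain ⟨f, hf, hfa⟩ := ih (insert c D) (Function.update p c b) hcard' hb
      refine ⟨f, ?_, hfa⟩
      intro c' hc'
      have hne' : c' ≠ c := fun hh => hc (by rw [← hh]; exact hc')
      rw [hf c' (Set.mem_insert_of_mem _ hc'), Function.update_of_ne hne' _ _]

lemma isCorner_diagEnds (c : Cell n m) (b : Bool) :
    isCorner (diagEnds c b).1 c ∧ isCorner (diagEnds c b).2 c := by
  cases b <;> unfold diagEnds evenDiag oddDiag isCorner <;> split_ifs <;> tauto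


/-- If `D` contains every cell incident to a clued vertex and `p` is a
partial assignment on `D` whose diagonal graph is acyclic and gives every clued vertex
its clue value as degree, then `p` extends to a valid solution of the whole board, with
the degrees of clued vertices unchanged. -/
theorem extend_partial_solution (n m : ℕ) (K : Finset (Vertex n m × ℕ))
    (hK4 : ∀ q ∈ K, q.2 ≤ 4)
    (D : Set (Cell n m))
    (hD : ∀ c : Cell n m, (∃ q ∈ K, isCorner q.1 c) → c ∈ D)
    (p : Cell n m → Bool)
    (hacyc : (DiagGraph D p).IsAcyclic)
    (hdeg : ∀ q ∈ K, deg (DiagGraph D p) q.1 = q.2) :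
    ∃ f : Cell n m → Bool, (∀ c ∈ D, f c = p c) ∧
      (DiagGraph (Set.univ : Set (Cell n m)) f).IsAcyclic ∧
      (∀ q ∈ K, deg (DiagGraph (Set.univ : Set (Cell n m)) f) q.1 = q.2) ∧
      (∀ q ∈ K, deg (DiagGraph (Set.univ : Set (Cell n m)) f) q.1 =
          deg (DiagGraph D p) q.1) := by
  obtain ⟨f, hfp, hfacyc⟩ := extend_all (Set.univ \ D).ncard D p le_rfl hacyc
  have hnb : ∀ q ∈ K, (DiagGraph (Set.univ : Set (Cell n m)) f).neighborSet q.1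
      = (DiagGraph D p).neighborSet q.1 := by
    intro q hq
    ext u
    simp only [SimpleGraph.mem_neighborSet]
    constructor
    · intro hadj
      rcases adj_iff.mp hadj with ⟨hne, c, -, hor⟩
      have hcor : isCorner q.1 c := by
        rcases hor with hcc | hcc
        · have h1 := (isCorner_diagEnds c (f c)).1
          rw [hcc] at h1
          exact h1
        · have h1 := (isCorner_diagEnds c (f c)).2
          rw [hcc] at h1
          exact h1
      have hcD : c ∈ D := hD c ⟨q, hq, hcor⟩
      rw [adj_iff]
      refine ⟨hne, c, hcD, ?_⟩
      rw [← hfp c hcD]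
      exact hor
    · intro hadj
      rcases adj_iff.mp hadj with ⟨hne, c, hcD, hor⟩
      rw [adj_iff]
      refine ⟨hne, c, Set.mem_univ c, ?_⟩
      rw [hfp c hcD]
      exact hor
  refine ⟨f, hfp, hfacyc, ?_, ?_⟩
  · intro q hq
    unfold deg
    rw [hnb q hq]
    exact hdeg q hq
  · intro q hq
    unfold deg
    rw [hnb q hq]

end Slant
end
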